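/- Let (Ω, P) be a probability space with measurable functions p, p' : Ω → [0,1] and q : Ω → [0,1], and fix γ ∈ (0,1/2]. Suppose on an event A we have p ≥ 1/2 + γ and p' ≤ 1/2 - γ. Define margins m = |p - 1/2|, m' = |p' - 1/2|, regrets δ = 1 - (q·p + (1-q)(1-p))/(1/2+m) and δ' = 1 - (q·p' + (1-q)(1-p'))/(1/2+m'). Then on A, (δ + δ')/2 ≥ c(γ)/2 where c(γ) = 4γ/(1+2γ); consequently E[(δ + δ')/2] ≥ P(A)·c(γ)/2. -/

import Mathlib

open MeasureTheory

/-- Memory-necessity core: if on an event A the (shared-bet) policy faces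
p ≥ 1/2+γ and p' ≤ 1/2-γ, then the pair-averaged regret is at least c(γ)/2 on A,
hence in expectation at least P(A)·c(γ)/2. -/
theorem stmt_16 {Ω : Type*} [MeasurableSpace Ω] (P : Measure Ω) [IsProbabilityMeasure P]
    (γ : ℝ) (hγ : 0 < γ) (hγ' : γ ≤ 1/2)
    (p p' q : Ω → ℝ)
    (hp : ∀ ω, p ω ∈ Set.Icc (0:ℝ) 1) (hp' : ∀ ω, p' ω ∈ Set.Icc (0:ℝ) 1)
    (hq : ∀ ω, q ω ∈ Set.Icc (0:ℝ) 1)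
    (A : Set Ω) (hA : MeasurableSet A)
    (hpA : ∀ ω ∈ A, 1/2 + γ ≤ p ω) (hp'A : ∀ ω ∈ A, p' ω ≤ 1/2 - γ)
    (m m' δ δ' : Ω → ℝ)
    (hm : ∀ ω, m ω = |p ω - 1/2|) (hm' : ∀ ω, m' ω = |p' ω - 1/2|)
    (hδ : ∀ ω, δ ω = 1 - (q ω * p ω + (1 - q ω) * (1 - p ω)) / (1/2 + m ω))
    (hδ' : ∀ ω, δ' ω = 1 - (q ω * p' ω + (1 - q ω) * (1 - p' ω)) / (1/2 + m' ω))
    (hInt : Integrable (fun ω => (δ ω + δ' ω) / 2) P) :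
    (∀ ω ∈ A, (4 * γ / (1 + 2 * γ)) / 2 ≤ (δ ω + δ' ω) / 2) ∧
    (P A).toReal * ((4 * γ / (1 + 2 * γ)) / 2)
      ≤ ∫ ω, (δ ω + δ' ω) / 2 ∂P := by
  have hc : (0:ℝ) < 1 + 2*γ := by linarith
  have key : ∀ ω ∈ A, (4 * γ / (1 + 2 * γ)) / 2 ≤ (δ ω + δ' ω) / 2 := by
    intro ω hω
    have hx := hpA ω hω; have hy := hp'A ω hω
    have hx1 := (hp ω).2; have hy0 := (hp' ω).1
    have hq0 := (hq ω).1; have hq1 := (hq ω).2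
    have hxpos : (0:ℝ) < p ω := by linarith
    have hypos : (0:ℝ) < 1 - p' ω := by linarith
    have hmω : 1/2 + m ω = p ω := by
      rw [hm, abs_of_nonneg (by linarith)]; ring
    have hm'ω : 1/2 + m' ω = 1 - p' ω := by
      rw [hm', abs_of_nonpos (by linarith)]; ring
    have hcx : 4*γ/(1+2*γ) * p ω ≤ 2 * p ω - 1 := by
      rw [div_mul_eq_mul_div, div_le_iff₀ hc]; nlinarith
    have hcy : 4*γ/(1+2*γ) * (1 - p' ω) ≤ 1 - 2 * p' ω := by
      rw [div_mul_eq_mul_div, div_le_iff₀ hc]; nlinarith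
    have h1 : (q ω * p ω + (1 - q ω) * (1 - p ω)) / p ω
        ≤ 1 - (1 - q ω) * (4*γ/(1+2*γ)) := by
      rw [div_le_iff₀ hxpos]
      nlinarith [mul_nonneg (by linarith : (0:ℝ) ≤ 1 - q ω)
        (by linarith : (0:ℝ) ≤ 2 * p ω - 1 - 4*γ/(1+2*γ) * p ω)]
    have h2 : (q ω * p' ω + (1 - q ω) * (1 - p' ω)) / (1 - p' ω)
        ≤ 1 - q ω * (4*γ/(1+2*γ)) := by
      rw [div_le_iff₀ hypos]
      nlinarith [mul_nonneg hq0
        (by linarith : (0:ℝ) ≤ 1 - 2 * p' ω - 4*γ/(1+2*γ) * (1 - p' ω))]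
    rw [hδ, hδ', hmω, hm'ω]
    linarith
  refine ⟨key, ?_⟩
  have hnn : ∀ ω, 0 ≤ (δ ω + δ' ω) / 2 := by
    intro ω
    have hx0 := (hp ω).1; have hx1 := (hp ω).2
    have hy0 := (hp' ω).1; have hy1 := (hp' ω).2
    have hq0 := (hq ω).1; have hq1 := (hq ω).2
    have hm0 : 0 ≤ m ω := by rw [hm]; exact abs_nonneg _
    have hm'0 : 0 ≤ m' ω := by rw [hm']; exact abs_nonneg _
    have hmd : (0:ℝ) < 1/2 + m ω := by linarith
    have hm'd : (0:ℝ) < 1/2 + m' ω := by linarith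
    have ha1 : p ω - 1/2 ≤ m ω := by rw [hm]; exact le_abs_self _
    have ha2 : 1/2 - p ω ≤ m ω := by rw [hm]; have := neg_abs_le (p ω - 1/2); linarith
    have hb1 : p' ω - 1/2 ≤ m' ω := by rw [hm']; exact le_abs_self _
    have hb2 : 1/2 - p' ω ≤ m' ω := by rw [hm']; have := neg_abs_le (p' ω - 1/2); linarith
    have d1 : (q ω * p ω + (1 - q ω) * (1 - p ω)) / (1/2 + m ω) ≤ 1 := by
      rw [div_le_one hmd]; nlinarith
    have d2 : (q ω * p' ω + (1 - q ω) * (1 - p' ω)) / (1/2 + m' ω) ≤ 1 := by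
      rw [div_le_one hm'd]; nlinarith
    rw [hδ, hδ']; linarith
  have hstep : (4 * γ / (1 + 2 * γ)) / 2 * (P A).toReal
      ≤ ∫ ω in A, (δ ω + δ' ω) / 2 ∂P :=
    setIntegral_ge_of_const_le_real hA (measure_ne_top P A) key hInt.integrableOn
  have hstep2 : ∫ ω in A, (δ ω + δ' ω) / 2 ∂P ≤ ∫ ω, (δ ω + δ' ω) / 2 ∂P :=
    setIntegral_le_integral hInt (Filter.Eventually.of_forall hnn)
  calc (P A).toReal * ((4 * γ / (1 + 2 * γ)) / 2)
      = (4 * γ / (1 + 2 * γ)) / 2 * (P A).toReal := by ring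
    _ ≤ _ := hstep.trans hstep2
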